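/- Laplace transform of the one-parameter Mittag-Leffler function: Let 0 < μ ≤ 1, λ > 0, and let s > 0 be a real number with s^μ > λ. Then the function t ↦ exp(−s·t) · E_μ(−λ·t^μ) is integrable on (0,∞) and ∫₀^∞ exp(−s·t) · E_μ(−λ·t^μ) dt = s^{μ−1} / (s^μ + λ). -/

import Mathlib

open MeasureTheory Set

/-- Auxiliary: integrability of a pointwise `tsum` from summability of integral norms. -/
lemma my_integrable_tsum {α : Type*} [MeasurableSpace α] {μ : Measure α} {F : ℕ → α → ℝ}
    (hF_int : ∀ i, Integrable (F i) μ)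
    (hF_sum : Summable fun i => ∫ a, ‖F i a‖ ∂μ) :
    Integrable (fun a => ∑' i, F i a) μ := by
  have hmeas : ∀ i, AEMeasurable (fun a => (‖F i a‖₊ : ENNReal)) μ :=
    fun i => (hF_int i).aestronglyMeasurable.enorm
  have htop : ∑' i, ∫⁻ a, ‖F i a‖₊ ∂μ ≠ ⊤ := by
    have h1 : ∀ i, ∫⁻ a, ‖F i a‖₊ ∂μ = ENNReal.ofReal (∫ a, ‖F i a‖ ∂μ) :=
      fun i => (ofReal_integral_norm_eq_lintegral_enorm (hF_int i)).symm
    simp_rw [h1]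
    rw [← ENNReal.ofReal_tsum_of_nonneg (fun i => integral_nonneg fun a => norm_nonneg _) hF_sum]
    exact ENNReal.ofReal_ne_top
  have hlint : ∫⁻ a, ∑' i, (‖F i a‖₊ : ENNReal) ∂μ ≠ ⊤ := by
    rwa [lintegral_tsum hmeas]
  have hae : ∀ᵐ a ∂μ, Summable fun i => ‖F i a‖ := by
    filter_upwards [ae_lt_top' (AEMeasurable.ennreal_tsum hmeas) hlint] with a ha
    have h2 := ENNReal.tsum_coe_ne_top_iff_summable.mp ha.ne
    simpa [← NNReal.summable_coe] using h2
  have hsm : AEStronglyMeasurable (fun a => ∑' i, F i a) μ := by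
    refine aestronglyMeasurable_of_tendsto_ae
      (f := fun n a => ∑ i ∈ Finset.range n, F i a) Filter.atTop ?_ ?_
    · exact fun n => (Finset.range n).aestronglyMeasurable_fun_sum
        fun i _ => (hF_int i).aestronglyMeasurable
    · filter_upwards [hae] with a ha
      exact ha.of_norm.hasSum.tendsto_sum_nat
  refine ⟨hsm, ?_⟩
  show ∫⁻ a, ‖∑' i, F i a‖₊ ∂μ < ⊤
  calc ∫⁻ a, ‖∑' i, F i a‖₊ ∂μ ≤ ∫⁻ a, ∑' i, (‖F i a‖₊ : ENNReal) ∂μ := by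
        apply lintegral_mono_ae
        filter_upwards [hae] with a ha
        have hsum : Summable fun i => ‖F i a‖₊ := by
          rw [← NNReal.summable_coe]; simpa using ha
        calc (‖∑' i, F i a‖₊ : ENNReal)
            ≤ ((∑' i, ‖F i a‖₊ : NNReal) : ENNReal) :=
              ENNReal.coe_le_coe.mpr (nnnorm_tsum_le hsum)
          _ = ∑' i, (‖F i a‖₊ : ENNReal) := ENNReal.coe_tsum hsum
    _ < ⊤ := hlint.lt_top

/-- The one-parameter Mittag-Leffler function (real-valued version). -/
noncomputable def mittagLeffler (μ : ℝ) (z : ℝ) : ℝ :=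
  ∑' k : ℕ, z ^ k / Real.Gamma (μ * k + 1)

/-- Laplace transform of the one-parameter Mittag-Leffler function:
`∫₀^∞ e^{-s t} E_μ(-λ t^μ) dt = s^{μ-1}/(s^μ + λ)` for `0 < μ ≤ 1`, `λ > 0`,
`s > 0` with `s^μ > λ`. -/
theorem laplace_mittagLeffler (μ lam s : ℝ)
    (hμ0 : 0 < μ) (hμ1 : μ ≤ 1) (hlam : 0 < lam) (hs : 0 < s)
    (hslam : lam < s ^ μ) :
    IntegrableOn (fun t : ℝ => Real.exp (-s * t) * mittagLeffler μ (-lam * t ^ μ))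
        (Ioi (0 : ℝ)) ∧
      ∫ t in Ioi (0 : ℝ), Real.exp (-s * t) * mittagLeffler μ (-lam * t ^ μ)
        = s ^ (μ - 1) / (s ^ μ + lam) := by
  set g : ℕ → ℝ → ℝ := fun k t =>
    Real.exp (-s * t) * ((-lam * t ^ μ) ^ k / Real.Gamma (μ * k + 1)) with hg
  have hsp : 0 < s ^ μ := Real.rpow_pos_of_pos hs μ
  set r : ℝ := lam / s ^ μ with hrdef
  have hr0 : 0 < r := div_pos hlam hsp
  have hr1 : r < 1 := (div_lt_one hsp).mpr hslam
  have hμk : ∀ k : ℕ, 0 ≤ μ * k := fun k => mul_nonneg hμ0.le (Nat.cast_nonneg k)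
  have hΓ : ∀ k : ℕ, 0 < Real.Gamma (μ * k + 1) :=
    fun k => Real.Gamma_pos_of_pos (by linarith [hμk k])
  -- pointwise rewriting on `Ioi 0`
  have heq : ∀ k : ℕ, ∀ t ∈ Ioi (0 : ℝ), g k t =
      ((-lam) ^ k / Real.Gamma (μ * k + 1)) *
        (t ^ (μ * k + 1 - 1) * Real.exp (-(s * t))) := by
    intro k t ht
    have ht0 : (0 : ℝ) ≤ t := le_of_lt ht
    have hpow : t ^ (μ * k + 1 - 1) = (t ^ μ) ^ k := by
      rw [add_sub_cancel_right, Real.rpow_mul ht0, Real.rpow_natCast]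
    rw [hg]
    simp only []
    rw [hpow, mul_pow, neg_mul s t]
    ring
  have hnormeq : ∀ k : ℕ, ∀ t ∈ Ioi (0 : ℝ), ‖g k t‖ =
      (lam ^ k / Real.Gamma (μ * k + 1)) *
        (t ^ (μ * k + 1 - 1) * Real.exp (-(s * t))) := by
    intro k t ht
    have ht0 : (0 : ℝ) ≤ t := le_of_lt ht
    have htμ : (0 : ℝ) ≤ t ^ μ := Real.rpow_nonneg ht0 μ
    have hpow : t ^ (μ * k + 1 - 1) = (t ^ μ) ^ k := by
      rw [add_sub_cancel_right, Real.rpow_mul ht0, Real.rpow_natCast]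
    rw [hg]
    simp only []
    rw [Real.norm_eq_abs, abs_mul, abs_of_pos (Real.exp_pos _), abs_div,
      abs_of_pos (hΓ k), abs_pow, abs_mul, abs_neg, abs_of_pos hlam, abs_of_nonneg htμ,
      hpow, mul_pow, neg_mul s t]
    ring
  -- the base integral
  have hI : ∀ k : ℕ, ∫ t in Ioi (0 : ℝ), t ^ (μ * k + 1 - 1) * Real.exp (-(s * t))
      = (1 / s) ^ (μ * k + 1) * Real.Gamma (μ * k + 1) := fun k =>
    Real.integral_rpow_mul_exp_neg_mul_Ioi (by linarith [hμk k]) hs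
  -- integrability of each term
  have hint : ∀ k : ℕ, IntegrableOn (g k) (Ioi (0 : ℝ)) := by
    intro k
    have h1 : IntegrableOn
        (fun t : ℝ => ((-lam) ^ k / Real.Gamma (μ * k + 1)) *
          (t ^ (μ * k + 1 - 1) * Real.exp (-(s * t)))) (Ioi (0 : ℝ)) := by
      apply Integrable.const_mul
      have := integrableOn_rpow_mul_exp_neg_mul_rpow
        (p := 1) (s := μ * k + 1 - 1) (b := s) (by linarith [hμk k]) zero_lt_one hs
      simpa [neg_mul, IntegrableOn] using this
    exact h1.congr_fun (fun t ht => (heq k t ht).symm) measurableSet_Ioi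
  -- a key rpow identity
  have hkey : ∀ k : ℕ, (1 / s) ^ (μ * k + 1) = (1 / s) * ((s ^ μ)⁻¹) ^ k := by
    intro k
    have h1s : (0 : ℝ) < 1 / s := by positivity
    rw [Real.rpow_add h1s, Real.rpow_one, Real.rpow_mul h1s.le, Real.rpow_natCast,
      one_div, Real.inv_rpow hs.le, mul_comm]
  -- value of the norm integrals
  have hnormint : ∀ k : ℕ, (∫ t in Ioi (0 : ℝ), ‖g k t‖) = (1 / s) * r ^ k := by
    intro k
    rw [setIntegral_congr_fun measurableSet_Ioi (hnormeq k), integral_const_mul,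
      hI k, hkey k]
    have hrk : r ^ k = lam ^ k * ((s ^ μ)⁻¹) ^ k := by
      rw [hrdef, div_eq_mul_inv, mul_pow]
    rw [hrk]
    field_simp
  have hsum : Summable fun k : ℕ => ∫ t in Ioi (0 : ℝ), ‖g k t‖ := by
    simp_rw [hnormint]
    exact (summable_geometric_of_lt_one hr0.le hr1).mul_left _
  -- value of the integrals
  have hintval : ∀ k : ℕ, (∫ t in Ioi (0 : ℝ), g k t) = (1 / s) * (-r) ^ k := by
    intro k
    rw [setIntegral_congr_fun measurableSet_Ioi (heq k), integral_const_mul,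
      hI k, hkey k]
    have hrk : (-r) ^ k = (-lam) ^ k * ((s ^ μ)⁻¹) ^ k := by
      rw [← mul_pow, hrdef]; congr 1; field_simp
    rw [hrk]
    field_simp
  -- express the function as a tsum
  have hf : (fun t : ℝ => Real.exp (-s * t) * mittagLeffler μ (-lam * t ^ μ))
      = fun t => ∑' k, g k t := by
    funext t
    rw [mittagLeffler, ← tsum_mul_left]
  constructor
  · rw [hf]
    exact my_integrable_tsum hint hsum
  · rw [hf]
    rw [← integral_tsum_of_summable_integral_norm hint hsum]
    have hnr : ‖(-r : ℝ)‖ < 1 := by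
      rw [norm_neg, Real.norm_eq_abs, abs_of_pos hr0]; exact hr1
    calc ∑' k, ∫ t in Ioi (0 : ℝ), g k t
        = ∑' k : ℕ, (1 / s) * (-r) ^ k := tsum_congr hintval
      _ = (1 / s) * (1 - (-r))⁻¹ := by
          rw [tsum_mul_left, tsum_geometric_of_norm_lt_one hnr]
      _ = s ^ (μ - 1) / (s ^ μ + lam) := by
          rw [Real.rpow_sub hs, Real.rpow_one, hrdef]
          have hne : s ^ μ + lam ≠ 0 := by positivity
          field_simp
          rw [sub_neg_eq_add]; exact div_self hne
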